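/- Let |φ₀⟩ = (1/√n)·Σᵢ eᵢ be the uniform unit vector in ℝⁿ and |m⟩ = e_m a standard basis vector. Define H(s) = (1−s)(I − |φ₀⟩⟨φ₀|) + s(I − |m⟩⟨m|). Restricted to the 2-dimensional span of |φ₀⟩ and |m⟩, the two eigenvalues of H(s) are (1 ± √(1 − 4s(1−s)(1 − 1/n)))/2, so the spectral gap in this subspace at s = 1/2 equals 1/√n. -/

import Mathlib

open Matrix

lemma vecMulVec_mulVec' {n : ℕ} (u w v : Fin n → ℝ) :
    (vecMulVec u w).mulVec v = (w ⬝ᵥ v) • u := by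
  funext i
  simp [vecMulVec, mulVec, dotProduct, Finset.mul_sum, mul_assoc, mul_comm, mul_left_comm]

/-- Adiabatic Grover Hamiltonian `H(s) = (1-s)(I - |φ₀⟩⟨φ₀|) + s(I - |m⟩⟨m|)` with
`φ₀ = (1/√n)(1,…,1)`. Restricted to the 2-dimensional span of `φ₀` and `e_m`, its two
eigenvalues are `(1 ± √(1 - 4s(1-s)(1 - 1/n)))/2`; the corresponding spectral gap at
`s = 1/2` equals `1/√n`. -/
theorem stmt_12 (n : ℕ) (hn : 2 ≤ n) (m : Fin n) (s : ℝ) (hs : s ∈ Set.Icc (0 : ℝ) 1)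
    (φ₀ : Fin n → ℝ) (hφ₀ : φ₀ = fun _ => 1 / Real.sqrt n)
    (em : Fin n → ℝ) (hem : em = Pi.single m 1)
    (H : Matrix (Fin n) (Fin n) ℝ)
    (hH : H = (1 - s) • (1 - Matrix.vecMulVec φ₀ φ₀) + s • (1 - Matrix.vecMulVec em em))
    (D : ℝ) (hD : D = 1 - 4 * s * (1 - s) * (1 - 1 / n)) :
    (∀ lam ∈ ({(1 + Real.sqrt D) / 2, (1 - Real.sqrt D) / 2} : Set ℝ),
      ∃ v ∈ Submodule.span ℝ ({φ₀, em} : Set (Fin n → ℝ)),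
        v ≠ 0 ∧ H.mulVec v = lam • v) ∧
    (1 + Real.sqrt (1 - 4 * (1/2) * (1 - (1/2)) * (1 - 1 / n))) / 2 -
        (1 - Real.sqrt (1 - 4 * (1/2) * (1 - (1/2)) * (1 - 1 / n))) / 2 =
      1 / Real.sqrt n := by
  have hn0 : (0:ℝ) < n := by positivity
  have hn2 : (2:ℝ) ≤ n := by exact_mod_cast hn
  have hsn : (0:ℝ) < Real.sqrt n := Real.sqrt_pos.mpr hn0
  set c : ℝ := 1 / Real.sqrt n with hc
  have hc0 : c ≠ 0 := by positivity
  have hc2 : c * c = 1 / n := by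
    rw [hc, div_mul_div_comm, one_mul, Real.mul_self_sqrt hn0.le]
  have hinv1 : 1 / (n:ℝ) ≤ 1 := by
    rw [div_le_one hn0]; linarith
  have hinv0 : 0 < 1 / (n:ℝ) := by positivity
  constructor
  · -- eigenvalue part
    have hD0 : 0 ≤ D := by
      rw [hD]; nlinarith [sq_nonneg (2*s - 1), hs.1, hs.2]
    have hsqD : Real.sqrt D * Real.sqrt D = D := Real.mul_self_sqrt hD0
    -- dot products
    have d11 : φ₀ ⬝ᵥ φ₀ = 1 := by
      simp only [hφ₀, dotProduct, Finset.sum_const, Finset.card_univ, Fintype.card_fin,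
        nsmul_eq_mul]
      rw [hc2]
      field_simp
    have d12 : φ₀ ⬝ᵥ em = c := by
      rw [hφ₀, hem, dotProduct_single]; simp [hc]
    have d21 : em ⬝ᵥ φ₀ = c := by
      rw [hφ₀, hem, single_dotProduct]; simp [hc]
    have d22 : em ⬝ᵥ em = 1 := by
      rw [hem, single_dotProduct]; simp
    -- action of H
    have hmul : ∀ v : Fin n → ℝ,
        H.mulVec v = v - ((1-s) * (φ₀ ⬝ᵥ v)) • φ₀ - (s * (em ⬝ᵥ v)) • em := by
      intro v
      rw [hH]
      simp only [add_mulVec, smul_mulVec, sub_mulVec, one_mulVec,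
        vecMulVec_mulVec', smul_sub, smul_smul]
      module
    have hHφ : H.mulVec φ₀ = φ₀ - (1-s) • φ₀ - (s * c) • em := by
      rw [hmul, d11, d21]; module
    have hHe : H.mulVec em = em - ((1-s) * c) • φ₀ - s • em := by
      rw [hmul, d12, d22]; module
    -- generic construction
    have main : ∀ a b lam : ℝ,
        a * s - b * ((1-s) * c) = lam * a →
        b * (1-s) - a * (s * c) = lam * b →
        (a ≠ 0 ∨ b ≠ 0) →
        ∃ v ∈ Submodule.span ℝ ({φ₀, em} : Set (Fin n → ℝ)),
          v ≠ 0 ∧ H.mulVec v = lam • v := by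
      intro a b lam e1 e2 hab
      refine ⟨a • φ₀ + b • em, ?_, ?_, ?_⟩
      · exact Submodule.add_mem _
          (Submodule.smul_mem _ _ (Submodule.subset_span (Set.mem_insert _ _)))
          (Submodule.smul_mem _ _ (Submodule.subset_span
            (Set.mem_insert_of_mem _ rfl)))
      · intro hzero
        rcases hab with ha | hb
        · obtain ⟨j, hj⟩ := Fintype.exists_ne_of_one_lt_card (by simp; omega) m
          have := congrFun hzero j
          simp [hφ₀, hem, Pi.single_apply, hj] at this
          rcases this with h | h
          · exact ha h
          · exact absurd h (by positivity)
        · by_cases ha : a = 0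
          · have := congrFun hzero m
            simp [hφ₀, hem, Pi.single_apply, ha] at this
            exact hb this
          · obtain ⟨j, hj⟩ := Fintype.exists_ne_of_one_lt_card (by simp; omega) m
            have := congrFun hzero j
            simp [hφ₀, hem, Pi.single_apply, hj] at this
            rcases this with h | h
            · exact ha h
            · exact absurd h (by positivity)
      · rw [Matrix.mulVec_add, Matrix.mulVec_smul, Matrix.mulVec_smul, hHφ, hHe]
        rw [smul_add]
        match_scalars
        · linear_combination e1
        · linear_combination e2
    intro lam hlam
    -- key quadratic identity
    have hkey : lam * lam - lam + s * (1-s) * (1 - 1/(n:ℝ)) = 0 := by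
      simp only [Set.mem_insert_iff, Set.mem_singleton_iff] at hlam
      rcases hlam with h | h <;> subst h
      · linear_combination (1/4 : ℝ) * hsqD + (1/4 : ℝ) * hD
      · linear_combination (1/4 : ℝ) * hsqD + (1/4 : ℝ) * hD
    by_cases hsl : lam = s
    · by_cases hs0 : s = 0
      · refine main (1 - s - lam) (s * c) lam ?_ ?_ (Or.inl (by rw [hsl, hs0]; norm_num))
        · linear_combination hkey - s * (1-s) * hc2
        · ring
      · refine main (1 - s - lam) (s * c) lam ?_ ?_ (Or.inr (mul_ne_zero hs0 hc0))
        · linear_combination hkey - s * (1-s) * hc2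
        · ring
    · refine main ((1-s) * c) (s - lam) lam ?_
        ?_ (Or.inr (sub_ne_zero.mpr fun h => hsl h.symm))
      · ring
      · linear_combination hkey - s * (1-s) * hc2
  · -- gap at s = 1/2
    have h2 : 1 - 4 * (1/2 : ℝ) * (1 - 1/2) * (1 - 1/(n:ℝ)) = ((n:ℝ))⁻¹ := by
      field_simp
      try (left; ring)
      ring
    rw [h2, Real.sqrt_inv, hc]
    rw [one_div]
    ring
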